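/- Let H = (V,E,ω) be a connected weighted graph and let c, ℓ ∈ V. Then any two sum-constrained book-embeddings of H in which c is visible and in which ℓ is the first vertex have the same extension to the left of c. -/

import Mathlib

namespace Schematic

/-- A 1-page book-embedding of `G`: vertices are linearly ordered via an injective
real-valued placement `f`, and no two edges cross. -/
def IsBE {V : Type*} (G : SimpleGraph V) (f : V → ℝ) : Prop :=
  Function.Injective f ∧
  ∀ a b c d : V, G.Adj a b → G.Adj c d → ¬ (f a < f c ∧ f c < f b ∧ f b < f d)

/-- Edge `(u,v)` wraps around edge `(w,z)` (equivalently, `(w,z)` is nested into `(u,v)`),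
where `(w,z)` is written in increasing order. -/
def Wraps {V : Type*} (G : SimpleGraph V) (f : V → ℝ) (u v w z : V) : Prop :=
  G.Adj u v ∧ G.Adj w z ∧ s(u, v) ≠ s(w, z) ∧
  f u ≤ f w ∧ f w < f z ∧ f z ≤ f v

/-- A sum-constrained book-embedding: for every edge `(u,v)` (with `u ≺ v`) and every
sequence of edges `(aᵢ,bᵢ)` distinct from `(u,v)` with
`u ⪯ a₀ ≺ b₀ ⪯ a₁ ≺ b₁ ⪯ ⋯ ⪯ v`, the weight of `(u,v)` exceeds the sum of the
weights of the `(aᵢ,bᵢ)`. -/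
def IsSumBE {V : Type*} (G : SimpleGraph V) (ω : V → V → ℝ) (f : V → ℝ) : Prop :=
  IsBE G f ∧
  ∀ u v : V, G.Adj u v → f u < f v →
    ∀ (k : ℕ) (a b : Fin k → V),
      (∀ i, G.Adj (a i) (b i)) →
      (∀ i, s(a i, b i) ≠ s(u, v)) →
      (∀ i, f u ≤ f (a i)) →
      (∀ i, f (a i) < f (b i)) →
      (∀ i, f (b i) ≤ f v) →
      (∀ i j, i < j → f (b i) ≤ f (a j)) →
      ∑ i, ω (a i) (b i) < ω u v

/-- A vertex `c` is visible in a book-embedding: no edge has one endpoint strictly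
before `c` and the other strictly after `c`. -/
def Visible {V : Type*} (G : SimpleGraph V) (f : V → ℝ) (c : V) : Prop :=
  ¬ ∃ u v : V, G.Adj u v ∧ f u < f c ∧ f c < f v

open Classical in
/-- The extension of a book-embedding to the left of a (visible) vertex `c`: the sum of
the weights of the outermost edges both of whose endpoints are `⪯ c`. -/
noncomputable def leftExt {V : Type*} [Fintype V] (G : SimpleGraph V)
    (ω : V → V → ℝ) (f : V → ℝ) (c : V) : ℝ :=
  ∑ p : V × V,
    if G.Adj p.1 p.2 ∧ f p.1 < f p.2 ∧ f p.2 ≤ f c ∧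
        ¬ ∃ w z : V, Wraps G f w z p.1 p.2
    then ω p.1 p.2 else 0

open Classical in
/-- The extension of a book-embedding to the right of a (visible) vertex `c`: the sum of
the weights of the outermost edges both of whose endpoints are `⪰ c`. -/
noncomputable def rightExt {V : Type*} [Fintype V] (G : SimpleGraph V)
    (ω : V → V → ℝ) (f : V → ℝ) (c : V) : ℝ :=
  ∑ p : V × V,
    if G.Adj p.1 p.2 ∧ f p.1 < f p.2 ∧ f c ≤ f p.1 ∧
        ¬ ∃ w z : V, Wraps G f w z p.1 p.2
    then ω p.1 p.2 else 0

section Aux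

variable {V : Type*} {G : SimpleGraph V} {ω : V → V → ℝ} {f : V → ℝ} {c ℓ : V}

/-- `(u,v)` is an outermost edge lying (weakly) to the left of `c`. -/
def Out (G : SimpleGraph V) (f : V → ℝ) (c u v : V) : Prop :=
  G.Adj u v ∧ f u < f v ∧ f v ≤ f c ∧ ¬ ∃ w z : V, Wraps G f w z u v

/-- `u` is "pinned": every left-side edge spanning just to the right of `u`
has `u` as its left endpoint. -/
def Pin (G : SimpleGraph V) (f : V → ℝ) (c u : V) : Prop :=
  ∀ a b : V, G.Adj a b → f a ≤ f u → f u < f b → f b ≤ f c → a = u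

/-- A simple path whose first vertex is (weakly) lowest and last vertex (weakly)
highest is monotone in a book-embedding. -/
lemma path_mono (hbe : IsBE G f) :
    ∀ (k : ℕ) (v : ℕ → V),
      (∀ i j, i ≤ k → j ≤ k → v i = v j → i = j) →
      (∀ i, i < k → G.Adj (v i) (v (i+1))) →
      (∀ i, i ≤ k → f (v 0) ≤ f (v i)) →
      (∀ i, i ≤ k → f (v i) ≤ f (v k)) →
      ∀ i, i < k → f (v i) < f (v (i+1)) := by
  intro k
  induction k with
  | zero => intro v _ _ _ _ i hi; exact absurd hi (Nat.not_lt_zero i)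
  | succ k ih =>
    intro v hinj hadj hmin hmax
    obtain ⟨m, hm_mem, hm⟩ := Finset.exists_max_image (Finset.range (k+1))
      (fun i => f (v i)) ⟨0, by simp⟩
    rw [Finset.mem_range] at hm_mem
    have hmle : m ≤ k := by omega
    have hmmax : ∀ i, i ≤ k → f (v i) ≤ f (v m) := fun i hi =>
      hm i (Finset.mem_range.mpr (by omega))
    have hne : ∀ i j, i ≤ k+1 → j ≤ k+1 → i ≠ j → f (v i) ≠ f (v j) := by
      intro i j hi hj hij h
      exact hij (hinj i j hi hj (hbe.1 h))
    by_cases hmk : m = k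
    · have hres := ih v (fun i j hi hj => hinj i j (by omega) (by omega))
        (fun i hi => hadj i (by omega)) (fun i hi => hmin i (by omega))
        (fun i hi => hmk ▸ hmmax i hi)
      intro i hi
      rcases Nat.lt_succ_iff_lt_or_eq.mp hi with h | h
      · exact hres i h
      · subst h
        exact (hmax i (by omega)).lt_of_ne (hne i (i+1) (by omega) (by omega) (by omega))
    · exfalso
      have hmlt : m < k := by omega
      have hm1 : 1 ≤ m := by
        by_contra h
        have hm0 : m = 0 := by omega
        have h1 : f (v 1) ≤ f (v m) := hmmax 1 (by omega)
        have h2 : f (v 0) ≤ f (v 1) := hmin 1 (by omega)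
        rw [hm0] at h1
        exact hne 0 1 (by omega) (by omega) (by omega) (le_antisymm h2 h1)
      have hk1m : f (v k) < f (v m) :=
        (hmmax k le_rfl).lt_of_ne (hne k m (by omega) (by omega) (by omega))
      have h0k : f (v 0) < f (v k) :=
        (hmin k (by omega)).lt_of_ne (hne 0 k (by omega) (by omega) (by omega))
      set T := (Finset.range m).filter (fun i => f (v i) < f (v k)) with hT
      have hT0 : 0 ∈ T := by
        simp only [hT, Finset.mem_filter, Finset.mem_range]
        exact ⟨by omega, h0k⟩
      set i := T.max' ⟨0, hT0⟩ with hidef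
      have hiT : i ∈ T := Finset.max'_mem _ _
      simp only [hT, Finset.mem_filter, Finset.mem_range] at hiT
      obtain ⟨him, hif⟩ := hiT
      have hnext : f (v k) < f (v (i+1)) := by
        by_cases h : i + 1 = m
        · rw [h]; exact hk1m
        · have h1 : i + 1 < m := by omega
          have h2 : i + 1 ∉ T := by
            intro hmem
            have := Finset.le_max' T (i+1) hmem
            omega
          simp only [hT, Finset.mem_filter, Finset.mem_range] at h2
          push_neg at h2
          exact (h2 h1).lt_of_ne (hne k (i+1) (by omega) (by omega) (by omega))
      have hlast : f (v (i+1)) < f (v (k+1)) :=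
        (hmax (i+1) (by omega)).lt_of_ne (hne (i+1) (k+1) (by omega) (by omega) (by omega))
      exact hbe.2 (v i) (v (i+1)) (v k) (v (k+1)) (hadj i (by omega)) (hadj k (by omega))
        ⟨hif, hnext, hlast⟩

lemma chain_mono {m : ℕ} {x : ℕ → V}
    (hx : ∀ j, j < m → f (x j) < f (x (j+1))) :
    ∀ i j, i < j → j ≤ m → f (x i) < f (x j) := by
  intro i j hij hjm
  induction j with
  | zero => omega
  | succ j ihj =>
    rcases Nat.lt_succ_iff_lt_or_eq.mp hij with h | h
    · exact lt_trans (ihj h (by omega)) (hx j (by omega))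
    · subst h; exact hx i (by omega)

lemma chain_inj (hbe : IsBE G f) {m : ℕ} {x : ℕ → V}
    (hmono : ∀ j, j < m → f (x j) < f (x (j+1))) :
    ∀ i j, i ≤ m → j ≤ m → x i = x j → i = j := by
  intro i j hi hj he
  by_contra h
  rcases Nat.lt_or_ge i j with h2 | h2
  · have := chain_mono hmono i j h2 hj
    rw [he] at this
    exact lt_irrefl _ this
  · have h3 : j < i := by omega
    have := chain_mono hmono j i h3 hi
    rw [he] at this
    exact lt_irrefl _ this

lemma walk_cross {P : V → Prop} :
    ∀ {a b : V}, G.Walk a b → P a → ¬ P b → ∃ u v, G.Adj u v ∧ P u ∧ ¬ P v := by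
  intro a b W
  induction W with
  | nil => intro h1 h2; exact absurd h1 h2
  | @cons u x b' h W ih =>
    intro h1 h2
    by_cases hx : P x
    · exact ih hx h2
    · exact ⟨u, x, h, h1, hx⟩

lemma exists_span (hconn : G.Connected) (hvis : Visible G f c)
    (hfirst : ∀ v, f ℓ ≤ f v) {t : V} (ht : f t < f c) :
    ∃ u v, G.Adj u v ∧ f u ≤ f t ∧ f t < f v ∧ f v ≤ f c := by
  obtain ⟨W⟩ := hconn.preconnected ℓ c
  obtain ⟨u, v, hadj, hu, hv⟩ := walk_cross (P := fun x => f x ≤ f t) W (hfirst t)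
    (not_le.mpr ht)
  refine ⟨u, v, hadj, hu, not_le.mp hv, ?_⟩
  by_contra h
  push_neg at h
  exact hvis ⟨u, v, hadj, lt_of_le_of_lt hu ht, h⟩

lemma step_lemma [Fintype V] (hf : IsSumBE G ω f) (hconn : G.Connected)
    (hvis : Visible G f c) (hfirst : ∀ v, f ℓ ≤ f v) {u : V}
    (hpin : Pin G f c u) (hu : f u < f c) :
    ∃ v, Out G f c u v ∧ Pin G f c v := by
  classical
  have hbe := hf.1
  set N := Finset.univ.filter (fun b => G.Adj u b ∧ f u < f b ∧ f b ≤ f c) with hN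
  have hNne : N.Nonempty := by
    obtain ⟨a, b, hadj, ha, hab, hbc⟩ := exists_span hconn hvis hfirst hu
    have hau : a = u := hpin a b hadj ha hab hbc
    subst hau
    exact ⟨b, by simp [hN, hadj, hab, hbc]⟩
  obtain ⟨v, hvmem, hvmax⟩ := Finset.exists_max_image N (fun b => f b) hNne
  simp only [hN, Finset.mem_filter, Finset.mem_univ, true_and] at hvmem
  obtain ⟨hadj, huv, hvc⟩ := hvmem
  have hvmax' : ∀ b, G.Adj u b → f u < f b → f b ≤ f c → f b ≤ f v := by
    intro b h1 h2 h3
    exact hvmax b (by simp [hN, h1, h2, h3])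
  have hout : Out G f c u v := by
    refine ⟨hadj, huv, hvc, ?_⟩
    rintro ⟨w, z, hwz, -, hsne, hwu, huv2, hvz⟩
    have hzc : f z ≤ f c := by
      by_contra h
      push_neg at h
      exact hvis ⟨w, z, hwz, lt_of_le_of_lt hwu hu, h⟩
    have hwu2 : w = u := hpin w z hwz hwu (lt_of_lt_of_le huv2 hvz) hzc
    subst hwu2
    have hzv : f z ≤ f v := hvmax' z hwz (lt_of_lt_of_le huv2 hvz) hzc
    have hzv2 : z = v := hbe.1 (le_antisymm hzv hvz)
    subst hzv2
    exact hsne rfl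
  refine ⟨v, hout, ?_⟩
  intro a b hab ha hvb hbc
  rcases lt_trichotomy (f a) (f v) with h | h | h
  · exfalso
    rcases le_or_gt (f a) (f u) with h2 | h2
    · apply hout.2.2.2
      refine ⟨a, b, hab, hadj, ?_, h2, huv, hvb.le⟩
      intro hs
      rcases Sym2.eq_iff.mp hs with ⟨h3, h4⟩ | ⟨h3, h4⟩
      · rw [h4] at hvb; exact lt_irrefl _ hvb
      · rw [h4] at hvb; exact lt_irrefl _ (hvb.trans huv)
    · exact hbe.2 u v a b hadj hab ⟨h2, h, hvb⟩
  · exact hbe.1 h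
  · exact absurd ha (not_le.mpr h)

lemma reach [Fintype V] (hf : IsSumBE G ω f) (hconn : G.Connected)
    (hvis : Visible G f c) (hfirst : ∀ v, f ℓ ≤ f v) :
    ∀ (n : ℕ) (u : V), Pin G f c u → f u ≤ f c →
      (Finset.univ.filter (fun w => f u < f w ∧ f w ≤ f c)).card ≤ n →
      ∃ (m : ℕ) (x : ℕ → V), x 0 = u ∧ x m = c ∧
        ∀ j, j < m → Out G f c (x j) (x (j+1)) := by
  classical
  intro n
  induction n with
  | zero =>
    intro u hpin huc hcard
    have huc2 : u = c := by
      by_contra h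
      have huc3 : f u < f c := huc.lt_of_ne (fun he => h (hf.1.1 he))
      have hcmem : c ∈ Finset.univ.filter (fun w => f u < f w ∧ f w ≤ f c) := by
        simp [huc3]
      have := Finset.card_pos.mpr ⟨c, hcmem⟩
      omega
    exact ⟨0, fun _ => u, rfl, huc2, fun j hj => absurd hj (Nat.not_lt_zero j)⟩
  | succ n ih =>
    intro u hpin huc hcard
    by_cases h : u = c
    · exact ⟨0, fun _ => u, rfl, h, fun j hj => absurd hj (Nat.not_lt_zero j)⟩
    · have huc2 : f u < f c := huc.lt_of_ne (fun he => h (hf.1.1 he))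
      obtain ⟨v, hout, hpinv⟩ := step_lemma hf hconn hvis hfirst hpin huc2
      have hcard2 : (Finset.univ.filter (fun w => f v < f w ∧ f w ≤ f c)).card ≤ n := by
        have hss : Finset.univ.filter (fun w => f v < f w ∧ f w ≤ f c) ⊂
            Finset.univ.filter (fun w => f u < f w ∧ f w ≤ f c) := by
          constructor
          · intro w hw
            simp only [Finset.mem_filter, Finset.mem_univ, true_and] at hw ⊢
            exact ⟨hout.2.1.trans hw.1, hw.2⟩
          · intro hsub
            have hv : v ∈ Finset.univ.filter (fun w => f u < f w ∧ f w ≤ f c) := by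
              simp [hout.2.1, hout.2.2.1]
            have := hsub hv
            simp only [Finset.mem_filter, Finset.mem_univ, true_and] at this
            exact lt_irrefl _ this.1
        have := Finset.card_lt_card hss
        omega
      obtain ⟨m, x, hx0, hxm, hchain⟩ := ih v hpinv hout.2.2.1 hcard2
      refine ⟨m + 1, fun j => if j = 0 then u else x (j - 1), by simp, ?_, ?_⟩
      · simp only [Nat.succ_ne_zero, if_neg]
        simpa using hxm
      · intro j hj
        by_cases hj0 : j = 0
        · subst hj0
          simpa [hx0] using hout
        · show Out G f c (if j = 0 then u else x (j-1)) (if j + 1 = 0 then u else x (j+1-1))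
          rw [if_neg hj0, if_neg (by omega : ¬ j + 1 = 0)]
          have e1 : j + 1 - 1 = (j - 1) + 1 := by omega
          rw [e1]
          exact hchain (j-1) (by omega)

lemma chain_exists [Fintype V] (hf : IsSumBE G ω f) (hconn : G.Connected)
    (hvis : Visible G f c) (hfirst : ∀ v, f ℓ ≤ f v) :
    ∃ (m : ℕ) (x : ℕ → V), x 0 = ℓ ∧ x m = c ∧
      ∀ j, j < m → Out G f c (x j) (x (j+1)) := by
  classical
  have hpin : Pin G f c ℓ := by
    intro a b hadj ha hb hbc
    exact hf.1.1 (le_antisymm ha (hfirst a))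
  exact reach hf hconn hvis hfirst
    (Finset.univ.filter (fun w => f ℓ < f w ∧ f w ≤ f c)).card ℓ hpin (hfirst c) le_rfl

lemma out_char (hbe : IsBE G f) (hfirst : ∀ v, f ℓ ≤ f v) {m : ℕ} {x : ℕ → V}
    (hx0 : x 0 = ℓ) (hxm : x m = c)
    (hout : ∀ j, j < m → Out G f c (x j) (x (j+1)))
    {u v : V} (huv : Out G f c u v) :
    ∃ j, j < m ∧ u = x j ∧ v = x (j+1) := by
  classical
  obtain ⟨hadj, hufv, hvc, hnw⟩ := huv
  set T := (Finset.range (m+1)).filter (fun j => f (x j) < f v) with hT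
  have hT0 : 0 ∈ T := by
    simp only [hT, Finset.mem_filter, Finset.mem_range]
    exact ⟨by omega, by rw [hx0]; exact lt_of_le_of_lt (hfirst u) hufv⟩
  set j := T.max' ⟨0, hT0⟩ with hjdef
  have hjT : j ∈ T := Finset.max'_mem _ _
  simp only [hT, Finset.mem_filter, Finset.mem_range] at hjT
  obtain ⟨hjm, hjf⟩ := hjT
  have hjm2 : j < m := by
    rcases Nat.lt_succ_iff_lt_or_eq.mp hjm with h | h
    · exact h
    · exfalso
      rw [h, hxm] at hjf
      exact absurd hvc (not_le.mpr hjf)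
  have h2 : f v ≤ f (x (j+1)) := by
    by_contra h
    push_neg at h
    have hmem : j + 1 ∈ T := by
      simp only [hT, Finset.mem_filter, Finset.mem_range]
      exact ⟨by omega, h⟩
    have := Finset.le_max' T (j+1) hmem
    omega
  obtain ⟨hadj2, hxf, hxc, hnw2⟩ := hout j hjm2
  rcases lt_trichotomy (f u) (f (x j)) with h | h | h
  · exfalso
    rcases h2.lt_or_eq with h3 | h3
    · exact hbe.2 u v (x j) (x (j+1)) hadj hadj2 ⟨h, hjf, h3⟩
    · apply hnw2
      refine ⟨u, v, hadj, hadj2, ?_, h.le, hxf, h3.ge⟩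
      intro hs
      rcases Sym2.eq_iff.mp hs with ⟨h4, h5⟩ | ⟨h4, h5⟩
      · rw [h4] at h; exact lt_irrefl _ h
      · rw [h5] at hjf; exact lt_irrefl _ hjf
  · have hu : u = x j := hbe.1 h
    rcases h2.lt_or_eq with h3 | h3
    · exfalso
      apply hnw
      refine ⟨x j, x (j+1), hadj2, hadj, ?_, h.ge, hufv, h3.le⟩
      intro hs
      rcases Sym2.eq_iff.mp hs with ⟨h4, h5⟩ | ⟨h4, h5⟩
      · rw [← h5] at h3; exact lt_irrefl _ h3
      · rw [← h4] at hufv; rw [h] at hufv; exact lt_irrefl _ hufv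
    · exact ⟨j, hjm2, hu, hbe.1 h3⟩
  · exfalso
    apply hnw
    refine ⟨x j, x (j+1), hadj2, hadj, ?_, h.le, hufv, h2⟩
    intro hs
    rcases Sym2.eq_iff.mp hs with ⟨h4, h5⟩ | ⟨h4, h5⟩
    · rw [h4] at h; exact lt_irrefl _ h
    · rw [h5] at h2
      exact absurd hufv (not_lt.mpr h2)

lemma leftExt_eq_chain [Fintype V] (hbe : IsBE G f) (hfirst : ∀ v, f ℓ ≤ f v)
    {m : ℕ} {x : ℕ → V} (hx0 : x 0 = ℓ) (hxm : x m = c)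
    (hout : ∀ j, j < m → Out G f c (x j) (x (j+1))) :
    leftExt G ω f c = ∑ j ∈ Finset.range m, ω (x j) (x (j+1)) := by
  classical
  have hxinj := chain_inj hbe (fun j hj => (hout j hj).2.1)
  unfold leftExt
  rw [← Finset.sum_filter]
  have hset : Finset.univ.filter (fun p : V × V => G.Adj p.1 p.2 ∧ f p.1 < f p.2 ∧
      f p.2 ≤ f c ∧ ¬ ∃ w z : V, Wraps G f w z p.1 p.2) =
      (Finset.range m).image (fun j => (x j, x (j+1))) := by
    ext p
    obtain ⟨p1, p2⟩ := p
    simp only [Finset.mem_filter, Finset.mem_univ, true_and, Finset.mem_image,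
      Finset.mem_range]
    constructor
    · intro h
      obtain ⟨j, hj, h1, h2⟩ := out_char hbe hfirst hx0 hxm hout h
      exact ⟨j, hj, by rw [← h1, ← h2]⟩
    · rintro ⟨j, hj, he⟩
      rw [Prod.mk.injEq] at he
      rw [← he.1, ← he.2]
      exact hout j hj
  rw [hset, Finset.sum_image]
  intro a ha b hb he
  rw [Finset.mem_coe, Finset.mem_range] at ha hb
  rw [Prod.mk.injEq] at he
  exact hxinj a b (by omega) (by omega) he.1

lemma chain_le [Fintype V] (hf : IsSumBE G ω f) (hvis : Visible G f c)
    (hfirst : ∀ v, f ℓ ≤ f v)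
    {m : ℕ} {x : ℕ → V} (hx0 : x 0 = ℓ) (hxm : x m = c)
    (hout : ∀ j, j < m → Out G f c (x j) (x (j+1)))
    {n : ℕ} {y : ℕ → V} (hy0 : y 0 = ℓ) (hyn : y n = c)
    (hyadj : ∀ i, i < n → G.Adj (y i) (y (i+1)))
    (hyinj : ∀ i j, i ≤ n → j ≤ n → y i = y j → i = j) :
    ∑ i ∈ Finset.range n, ω (y i) (y (i+1)) ≤ ∑ j ∈ Finset.range m, ω (x j) (x (j+1)) := by
  classical
  have hbe := hf.1
  have hxmono : ∀ j, j < m → f (x j) < f (x (j+1)) := fun j hj => (hout j hj).2.1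
  rcases Nat.eq_zero_or_pos n with hn0 | hn0
  · subst hn0
    have hlc : ℓ = c := by rw [← hy0, hyn]
    have hm0 : m = 0 := by
      by_contra h
      have := chain_mono hxmono 0 m (by omega) le_rfl
      rw [hx0, hxm, hlc] at this
      exact lt_irrefl _ this
    simp [hm0]
  · have hyc : ∀ i, i ≤ n → f (y i) ≤ f c := by
      intro i hi
      induction i with
      | zero => rw [hy0]; exact hfirst c
      | succ i ihi =>
        have h1 : f (y i) ≤ f c := ihi (by omega)
        have h2 : y i ≠ c := by
          intro h
          have := hyinj i n (by omega) le_rfl (h.trans hyn.symm)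
          omega
        have h3 : f (y i) < f c := h1.lt_of_ne (fun he => h2 (hbe.1 he))
        by_contra h
        push_neg at h
        exact hvis ⟨y i, y (i+1), hyadj i (by omega), h3, h⟩
    have hymono : ∀ i, i < n → f (y i) < f (y (i+1)) := by
      apply path_mono hbe n y hyinj hyadj
      · intro i hi; rw [hy0]; exact hfirst _
      · intro i hi; rw [hyn]; exact hyc i hi
    have hymono2 := chain_mono hymono
    have hyweak : ∀ i j, i ≤ j → j ≤ n → f (y i) ≤ f (y j) := by
      intro i j hij hjn
      rcases Nat.lt_or_ge i j with h | h
      · exact (hymono2 i j h hjn).le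
      · have hij2 : i = j := by omega
        rw [hij2]
    have hm0 : 0 < m := by
      by_contra h
      have hm : m = 0 := by omega
      have h1 : f (y 0) < f (y n) := hymono2 0 n hn0 le_rfl
      rw [hy0, hyn] at h1
      rw [← hx0, ← hxm, hm] at h1
      exact lt_irrefl _ h1
    have hTne : ∀ i : ℕ, ((Finset.range m).filter (fun j => f (x j) ≤ f (y i))).Nonempty := by
      intro i
      refine ⟨0, ?_⟩
      simp only [Finset.mem_filter, Finset.mem_range]
      exact ⟨hm0, by rw [hx0]; exact hfirst _⟩
    set J : ℕ → ℕ := fun i =>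
      ((Finset.range m).filter (fun j => f (x j) ≤ f (y i))).max' (hTne i) with hJdef
    have hJmem : ∀ i, J i ∈ (Finset.range m).filter (fun j => f (x j) ≤ f (y i)) :=
      fun i => Finset.max'_mem _ _
    have hJlt : ∀ i, J i < m := fun i => Finset.mem_range.mp (Finset.mem_filter.mp (hJmem i)).1
    have hJle : ∀ i, f (x (J i)) ≤ f (y i) := fun i => (Finset.mem_filter.mp (hJmem i)).2
    have hJup : ∀ i, i < n → f (y i) < f (x (J i + 1)) := by
      intro i hi
      by_cases h : J i + 1 = m
      · rw [h, hxm]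
        have h1 := hymono2 i n hi le_rfl
        rw [hyn] at h1
        exact h1
      · have h1 : J i + 1 < m := by have := hJlt i; omega
        by_contra h2
        push_neg at h2
        have hmem : J i + 1 ∈ (Finset.range m).filter (fun j => f (x j) ≤ f (y i)) := by
          simp only [Finset.mem_filter, Finset.mem_range]
          exact ⟨h1, h2⟩
        have h3 : J i + 1 ≤ J i := Finset.le_max' _ _ hmem
        omega
    have hJub : ∀ i, i < n → f (y (i+1)) ≤ f (x (J i + 1)) := by
      intro i hi
      by_contra h
      push_neg at h
      have hadjx := (hout (J i) (hJlt i)).1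
      rcases (hJle i).lt_or_eq with h2 | h2
      · exact hbe.2 (x (J i)) (x (J i + 1)) (y i) (y (i+1)) hadjx (hyadj i hi)
          ⟨h2, hJup i hi, h⟩
      · apply (hout (J i) (hJlt i)).2.2.2
        refine ⟨y i, y (i+1), hyadj i hi, hadjx, ?_, h2.ge, hxmono _ (hJlt i), h.le⟩
        intro hs
        rcases Sym2.eq_iff.mp hs with ⟨h4, h5⟩ | ⟨h4, h5⟩
        · rw [h5] at h; exact lt_irrefl _ h
        · have h6 := hJup i hi
          rw [h4] at h6
          exact lt_irrefl _ h6
    rw [← Finset.sum_fiberwise_of_maps_to (g := J) (t := Finset.range m)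
      (fun i _ => Finset.mem_range.mpr (hJlt i)) (fun i => ω (y i) (y (i+1)))]
    apply Finset.sum_le_sum
    intro j hj
    rw [Finset.mem_range] at hj
    set B := (Finset.range n).filter (fun i => J i = j) with hB
    have hBfact : ∀ i ∈ B, i < n ∧ f (x j) ≤ f (y i) ∧ f (y (i+1)) ≤ f (x (j+1)) := by
      intro i hiB
      simp only [hB, Finset.mem_filter, Finset.mem_range] at hiB
      obtain ⟨hin, hJi⟩ := hiB
      exact ⟨hin, by rw [← hJi]; exact hJle i, by rw [← hJi]; exact hJub i hin⟩
    by_cases hex : ∃ i ∈ B, y i = x j ∧ y (i+1) = x (j+1)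
    · obtain ⟨i, hiB, he1, he2⟩ := hex
      have hBsingle : B = {i} := by
        ext i2
        simp only [Finset.mem_singleton]
        constructor
        · intro hi2B
          by_contra hne
          obtain ⟨hi2n, hle1, hle2⟩ := hBfact i2 hi2B
          obtain ⟨hin, _, _⟩ := hBfact i hiB
          rcases Nat.lt_or_ge i2 i with hlt | hge
          · have h5 := hyweak (i2+1) i hlt (by omega)
            rw [he1] at h5
            exact absurd (hymono i2 hi2n) (not_lt.mpr (h5.trans hle1))
          · have hlt : i < i2 := by omega
            have h4 := hyweak (i+1) i2 hlt (by omega)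
            rw [he2] at h4
            have h5 := hymono i2 hi2n
            exact absurd (h4.trans_lt (h5.trans_le hle2)) (lt_irrefl _)
        · intro h5; rw [h5]; exact hiB
      rw [hBsingle, Finset.sum_singleton, he1, he2]
    · push_neg at hex
      set k := B.card with hk
      set σ := B.orderIsoOfFin hk.symm with hσ
      have hσmem : ∀ t : Fin k, (↑(σ t) : ℕ) ∈ B := fun t => (σ t).2
      have hc1 : ∀ t : Fin k, G.Adj (y (σ t)) (y ((σ t : ℕ) + 1)) :=
        fun t => hyadj _ (hBfact _ (hσmem t)).1
      have hc2 : ∀ t : Fin k, s(y (σ t), y ((σ t : ℕ) + 1)) ≠ s(x j, x (j+1)) := by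
        intro t hs
        rcases Sym2.eq_iff.mp hs with ⟨h4, h5⟩ | ⟨h4, h5⟩
        · exact hex _ (hσmem t) h4 h5
        · have h6 := hymono _ (hBfact _ (hσmem t)).1
          have h7 := (hBfact _ (hσmem t)).2.2
          rw [h4] at h6
          exact absurd (h6.trans_le h7) (lt_irrefl _)
      have hc3 : ∀ t : Fin k, f (x j) ≤ f (y (σ t)) :=
        fun t => (hBfact _ (hσmem t)).2.1
      have hc4 : ∀ t : Fin k, f (y (σ t)) < f (y ((σ t : ℕ) + 1)) :=
        fun t => hymono _ (hBfact _ (hσmem t)).1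
      have hc5 : ∀ t : Fin k, f (y ((σ t : ℕ) + 1)) ≤ f (x (j+1)) :=
        fun t => (hBfact _ (hσmem t)).2.2
      have hc6 : ∀ t t2 : Fin k, t < t2 → f (y ((σ t : ℕ) + 1)) ≤ f (y (σ t2)) := by
        intro t t2 htt
        have h1 : (σ t : ℕ) < (σ t2 : ℕ) := σ.strictMono htt
        exact hyweak _ _ (by omega) (hBfact _ (hσmem t2)).1.le
      have key := hf.2 (x j) (x (j+1)) (hout j hj).1 (hxmono j hj) k
        (fun t => y (σ t)) (fun t => y ((σ t : ℕ) + 1)) hc1 hc2 hc3 hc4 hc5 hc6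
      have hsum : ∑ i ∈ B, ω (y i) (y (i+1)) =
          ∑ t : Fin k, ω (y (σ t)) (y ((σ t : ℕ) + 1)) := by
        rw [← Finset.sum_coe_sort B (fun i => ω (y i) (y (i+1)))]
        exact (Equiv.sum_comp σ.toEquiv (fun b : B => ω (y (b : ℕ)) (y ((b : ℕ) + 1)))).symm
      rw [hsum]
      exact key.le

end Aux

/-- any two sum-constrained book-embeddings of a connected weighted graph
in which `c` is visible and `ℓ` is the first vertex have the same extension to the
left of `c`. -/
theorem leftExt_unique {V : Type*} [Fintype V]
    (G : SimpleGraph V) (ω : V → V → ℝ)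
    (hsym : ∀ u v, ω u v = ω v u)
    (hpos : ∀ u v, G.Adj u v → 0 < ω u v)
    (hconn : G.Connected) (c ℓ : V)
    (f f' : V → ℝ) (hf : IsSumBE G ω f) (hf' : IsSumBE G ω f')
    (hvis : Visible G f c) (hvis' : Visible G f' c)
    (hfirst : ∀ v, f ℓ ≤ f v) (hfirst' : ∀ v, f' ℓ ≤ f' v) :
    leftExt G ω f c = leftExt G ω f' c := by
  classical
  obtain ⟨m, x, hx0, hxm, hout⟩ := chain_exists hf hconn hvis hfirst
  obtain ⟨n, y, hy0, hyn, hout'⟩ := chain_exists hf' hconn hvis' hfirst'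
  rw [leftExt_eq_chain hf.1 hfirst hx0 hxm hout,
      leftExt_eq_chain hf'.1 hfirst' hy0 hyn hout']
  have hxinj := chain_inj hf.1 (fun j hj => (hout j hj).2.1)
  have hyinj := chain_inj hf'.1 (fun i hi => (hout' i hi).2.1)
  apply le_antisymm
  · exact chain_le hf' hvis' hfirst' hy0 hyn hout' hx0 hxm (fun j hj => (hout j hj).1) hxinj
  · exact chain_le hf hvis hfirst hx0 hxm hout hy0 hyn (fun i hi => (hout' i hi).1) hyinj

end Schematic
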